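/- Let q : (G,P) → (H,Q) be an (L,C,M)-quasi-isometry of pairs where Q is a reduced collection. Then the relation q̇ = {(A,B) ∈ G/P × H/Q : Hdist_H(q(A), B) < M} is the graph of a surjective function G/P → H/Q. If additionally P is reduced, q̇ is a bijection. -/

import Mathlib

open scoped Pointwise

variable {G : Type*} [Group G]

/-- Word distance between `g` and `h` with respect to a generating set `S` (values in `ℕ∞`). -/
noncomputable def wordDist (S : Set G) (g h : G) : ℕ∞ :=
  sInf {n : ℕ∞ | ∃ l : List G, (∀ x ∈ l, x ∈ S ∨ x⁻¹ ∈ S) ∧ l.prod = g⁻¹ * h ∧ (l.length : ℕ∞) = n}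

/-- Closed `r`-neighbourhood of a subset of `G` in the word metric. -/
def nbhd (S : Set G) (r : ℕ∞) (A : Set G) : Set G := {g | ∃ a ∈ A, wordDist S g a ≤ r}

/-- Hausdorff distance between subsets of `G` in the word metric. -/
noncomputable def hdist (S : Set G) (A B : Set G) : ℕ∞ :=
  sInf {r : ℕ∞ | A ⊆ nbhd S r B ∧ B ⊆ nbhd S r A}

/-- The conjugate subgroup `g P g⁻¹`. -/
def conjSub (g : G) (P : Subgroup G) : Subgroup G := ConjAct.toConjAct g • P

/-- The collection of all left cosets `gP`, `g ∈ G`, `P ∈ Ps`, as subsets of `G`. -/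
def cosetsOf (Ps : Set (Subgroup G)) : Set (Set G) :=
  {A | ∃ (g : G) (P : Subgroup G), P ∈ Ps ∧ A = g • (P : Set G)}

/-- A collection of subgroups is almost malnormal if any conjugate of a member meets any
member in a finite subgroup, except for the trivial configurations. -/
def AlmostMalnormal (Ps : Set (Subgroup G)) : Prop :=
  ∀ P ∈ Ps, ∀ P' ∈ Ps, ∀ g : G,
    ((conjSub g P ⊓ P' : Subgroup G) : Set G).Finite ∨ (P = P' ∧ g ∈ P)

/-- A collection of subgroups is reduced if commensurability of a member with a conjugate of a
member only happens trivially. -/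
def Reduced (Ps : Set (Subgroup G)) : Prop :=
  ∀ P ∈ Ps, ∀ Q ∈ Ps, ∀ g : G, Subgroup.Commensurable P (conjSub g Q) → P = Q ∧ g ∈ P

/-- `q` is an `(L, C, M)`-quasi-isometry of pairs `(G, Ps) → (H, Qs)`: an `(L, C)`-quasi-isometry
of the groups (with respect to the word metrics of `S` and `T`) such that the relation
`{(A, B) : Hdist(q(A), B) < M}` on left cosets projects surjectively to both factors. -/
def IsQIPair {H : Type*} [Group H] (S : Set G) (T : Set H) (q : G → H)
    (Ps : Set (Subgroup G)) (Qs : Set (Subgroup H)) (L C M : ℕ) : Prop :=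
  (∀ a b : G, wordDist T (q a) (q b) ≤ (L : ℕ∞) * wordDist S a b + (C : ℕ∞) ∧
      wordDist S a b ≤ (L : ℕ∞) * wordDist T (q a) (q b) + (C : ℕ∞)) ∧
  (∀ h : H, ∃ g : G, wordDist T (q g) h ≤ (C : ℕ∞)) ∧
  (∀ A ∈ cosetsOf Ps, ∃ B ∈ cosetsOf Qs, hdist T (q '' A) B < (M : ℕ∞)) ∧
  (∀ B ∈ cosetsOf Qs, ∃ A ∈ cosetsOf Ps, hdist T (q '' A) B < (M : ℕ∞))

private lemma enat_sInf_mem {s : Set ℕ∞} (hs : s.Nonempty) : sInf s ∈ s := csInf_mem hs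

private lemma set_nonempty_of_sInf_ne_top {s : Set ℕ∞} (h : sInf s ≠ ⊤) : s.Nonempty := by
  rcases s.eq_empty_or_nonempty with rfl | h'
  · simp at h
  · exact h'

private lemma wordDist_shift (S : Set G) (g h : G) :
    wordDist S g h = wordDist S 1 (g⁻¹ * h) := by
  simp only [wordDist, inv_one, one_mul]

private lemma wordDist_triangle (S : Set G) (a b c : G) :
    wordDist S a c ≤ wordDist S a b + wordDist S b c := by
  rcases eq_or_ne (wordDist S a b) ⊤ with h1 | h1
  · rw [h1]; simp
  rcases eq_or_ne (wordDist S b c) ⊤ with h2 | h2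
  · rw [h2]; simp
  have n1 : {n : ℕ∞ | ∃ l : List G, (∀ x ∈ l, x ∈ S ∨ x⁻¹ ∈ S) ∧ l.prod = a⁻¹ * b ∧
      (l.length : ℕ∞) = n}.Nonempty := set_nonempty_of_sInf_ne_top h1
  have n2 : {n : ℕ∞ | ∃ l : List G, (∀ x ∈ l, x ∈ S ∨ x⁻¹ ∈ S) ∧ l.prod = b⁻¹ * c ∧
      (l.length : ℕ∞) = n}.Nonempty := set_nonempty_of_sInf_ne_top h2
  obtain ⟨l₁, hl₁, hp₁, hn₁⟩ := enat_sInf_mem n1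
  obtain ⟨l₂, hl₂, hp₂, hn₂⟩ := enat_sInf_mem n2
  have hmem : wordDist S a b + wordDist S b c ∈
      {n : ℕ∞ | ∃ l : List G, (∀ x ∈ l, x ∈ S ∨ x⁻¹ ∈ S) ∧ l.prod = a⁻¹ * c ∧
      (l.length : ℕ∞) = n} := by
    refine ⟨l₁ ++ l₂, ?_, ?_, ?_⟩
    · intro x hx
      rcases List.mem_append.mp hx with h | h
      · exact hl₁ x h
      · exact hl₂ x h
    · rw [List.prod_append, hp₁, hp₂]; group
    · rw [List.length_append]; push_cast; rw [hn₁, hn₂]; rfl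
  exact sInf_le hmem

private lemma listSet_finite {α : Type*} {U : Set α} (hU : U.Finite) :
    ∀ n : ℕ, {l : List α | (∀ x ∈ l, x ∈ U) ∧ l.length ≤ n}.Finite := by
  intro n
  induction n with
  | zero =>
    refine Set.Finite.subset (Set.finite_singleton []) ?_
    rintro l ⟨-, hl⟩
    simp only [Set.mem_singleton_iff]
    exact List.length_eq_zero_iff.mp (Nat.le_zero.mp hl)
  | succ n ih =>
    refine Set.Finite.subset ((Set.finite_singleton ([] : List α)).union
      (Set.Finite.image2 List.cons hU ih)) ?_
    rintro l ⟨h1, h2⟩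
    cases l with
    | nil => exact Or.inl rfl
    | cons x l =>
      exact Or.inr (Set.mem_image2_of_mem (h1 x List.mem_cons_self)
        ⟨fun y hy => h1 y (List.mem_cons_of_mem x hy), Nat.succ_le_succ_iff.mp (by simpa using h2)⟩)

private lemma ball_finite {H : Type*} [Group H] (T : Set H) (hT : T.Finite) (n : ℕ) :
    {w : H | wordDist T 1 w ≤ (n : ℕ∞)}.Finite := by
  have hU : (T ∪ T⁻¹ : Set H).Finite := hT.union hT.inv
  refine Set.Finite.subset ((listSet_finite hU n).image List.prod) ?_
  intro w hw
  have hlt : wordDist T 1 w < ((n + 1 : ℕ) : ℕ∞) :=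
    lt_of_le_of_lt hw (by exact_mod_cast Nat.lt_succ_self n)
  obtain ⟨m, hm, hmlt⟩ := sInf_lt_iff.mp hlt
  obtain ⟨l, hl1, hl2, hl3⟩ := hm
  refine ⟨l, ⟨?_, ?_⟩, ?_⟩
  · intro x hx
    rcases hl1 x hx with h | h
    · exact Set.mem_union_left _ h
    · exact Set.mem_union_right _ (Set.mem_inv.mpr h)
  · have hlen : (l.length : ℕ∞) < ((n + 1 : ℕ) : ℕ∞) := hl3 ▸ hmlt
    exact Nat.lt_succ_iff.mp (by exact_mod_cast hlen)
  · simpa using hl2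

private lemma index_ne_zero_of_map {N : Type*} [Group N] (K : Subgroup N) {ι : Type*} [Finite ι]
    (f : N → ι) (hf : ∀ x y : N, f x = f y → x⁻¹ * y ∈ K) : K.index ≠ 0 := by
  have : Finite (N ⧸ K) := by
    refine Finite.of_injective (fun c : N ⧸ K => f (Quotient.out c)) ?_
    intro c d h
    have hcd := hf _ _ h
    rw [← Quotient.out_eq' c, ← Quotient.out_eq' d]
    exact QuotientGroup.eq.mpr hcd
  exact Subgroup.index_ne_zero_of_finite

private lemma mem_conjSub {H : Type*} [Group H] {g x : H} {P : Subgroup H} :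
    x ∈ conjSub g P ↔ ∃ p ∈ P, g * p * g⁻¹ = x := by
  simp only [conjSub, Subgroup.mem_smul_pointwise_iff_exists, ConjAct.toConjAct_smul]

private lemma nbhd_mono {H : Type*} [Group H] (T : Set H) {r r' : ℕ∞} (h : r ≤ r') (A : Set H) :
    nbhd T r A ⊆ nbhd T r' A := by
  rintro x ⟨a, ha, hd⟩; exact ⟨a, ha, hd.trans h⟩

private lemma nbhd_mono_set {H : Type*} [Group H] (T : Set H) (r : ℕ∞) {A B : Set H}
    (h : A ⊆ B) : nbhd T r A ⊆ nbhd T r B := by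
  rintro x ⟨a, ha, hd⟩; exact ⟨a, h ha, hd⟩

private lemma nbhd_nbhd {H : Type*} [Group H] (T : Set H) (r r' : ℕ∞) (A : Set H) :
    nbhd T r (nbhd T r' A) ⊆ nbhd T (r + r') A := by
  rintro x ⟨y, ⟨a, ha, hya⟩, hxy⟩
  exact ⟨a, ha, (wordDist_triangle T x y a).trans (add_le_add hxy hya)⟩

private lemma nbhd_chain {H : Type*} [Group H] {T : Set H} {r r' : ℕ∞} {A B C : Set H}
    (h1 : A ⊆ nbhd T r B) (h2 : B ⊆ nbhd T r' C) : A ⊆ nbhd T (r + r') C :=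
  h1.trans ((nbhd_mono_set T r h2).trans (nbhd_nbhd T r r' C))

private lemma hdist_lt {H : Type*} [Group H] {T : Set H} {A B : Set H} {M : ℕ∞}
    (h : hdist T A B < M) : ∃ r : ℕ∞, r < M ∧ A ⊆ nbhd T r B ∧ B ⊆ nbhd T r A := by
  obtain ⟨r, hr, hlt⟩ := sInf_lt_iff.mp h
  exact ⟨r, hlt, hr.1, hr.2⟩

private lemma commensurable_of_nbhd {H : Type*} [Group H] (T : Set H) (hT : T.Finite) (n : ℕ)
    (h₁ h₂ : H) (Q₁ Q₂ : Subgroup H)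
    (hsub1 : (h₁ • (Q₁ : Set H)) ⊆ nbhd T (n : ℕ∞) (h₂ • (Q₂ : Set H)))
    (hsub2 : (h₂ • (Q₂ : Set H)) ⊆ nbhd T (n : ℕ∞) (h₁ • (Q₁ : Set H))) :
    Subgroup.Commensurable Q₁ (conjSub (h₁⁻¹ * h₂) Q₂) := by
  set g := h₁⁻¹ * h₂ with hg
  set K2 := conjSub g Q₂ with hK2
  haveI : Finite ({w : H | wordDist T 1 w ≤ (n : ℕ∞)} : Set H) := (ball_finite T hT n).to_subtype
  have key1 : ∀ x : Q₁, ∃ w : ({w : H | wordDist T 1 w ≤ (n : ℕ∞)} : Set H),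
      ∃ p ∈ Q₂, (x : H) = g * p * (w : H)⁻¹ := by
    intro x
    have hx : h₁ * (x : H) ∈ h₁ • (Q₁ : Set H) := ⟨x, x.2, rfl⟩
    obtain ⟨a, ha, hd⟩ := hsub1 hx
    obtain ⟨p, hp, rfl⟩ := ha
    simp only [smul_eq_mul] at hd ⊢
    refine ⟨⟨(h₁ * (x : H))⁻¹ * (h₂ * p), ?_⟩, p, hp, ?_⟩
    · show wordDist T 1 _ ≤ _
      rw [← wordDist_shift]; exact hd
    · rw [hg]; group
  have key2 : ∀ x : K2, ∃ w : ({w : H | wordDist T 1 w ≤ (n : ℕ∞)} : Set H),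
      ∃ p ∈ Q₁, (x : H) = p * (w : H)⁻¹ * g⁻¹ := by
    intro x
    obtain ⟨p₂, hp₂, hpx⟩ := mem_conjSub.mp x.2
    have hx : h₂ * p₂ ∈ h₂ • (Q₂ : Set H) := ⟨p₂, hp₂, rfl⟩
    obtain ⟨a, ha, hd⟩ := hsub2 hx
    obtain ⟨q₁, hq₁, rfl⟩ := ha
    simp only [smul_eq_mul] at hd ⊢
    refine ⟨⟨(h₂ * p₂)⁻¹ * (h₁ * q₁), ?_⟩, q₁, hq₁, ?_⟩
    · show wordDist T 1 _ ≤ _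
      rw [← wordDist_shift]; exact hd
    · rw [← hpx, hg]; group
  unfold Subgroup.Commensurable
  constructor
  · -- (Q₁.subgroupOf K2).index ≠ 0
    have hc : ∀ x : K2, ∃ w : ({w : H | wordDist T 1 w ≤ (n : ℕ∞)} : Set H),
        ∃ p, p ∈ Q₁ ∧ ((x⁻¹ : K2) : H) = p * (w : H)⁻¹ * g⁻¹ := fun x => key2 x⁻¹
    choose f p hp hx using hc
    refine index_ne_zero_of_map (Q₁.subgroupOf K2) f ?_
    intro x y hfxy
    rw [Subgroup.mem_subgroupOf]
    have ex : ((x : H))⁻¹ = p x * ((f y : H))⁻¹ * g⁻¹ := by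
      have := hx x; rw [hfxy] at this; simpa using this
    have ey : ((y : H))⁻¹ = p y * ((f y : H))⁻¹ * g⁻¹ := by
      simpa using hx y
    have e : ((x⁻¹ * y : K2) : H) = p x * (p y)⁻¹ := by
      push_cast
      rw [ex, ← inv_inv ((y : H)), ey]
      group
    rw [e]
    exact Q₁.mul_mem (hp x) (Q₁.inv_mem (hp y))
  · have hc : ∀ x : Q₁, ∃ w : ({w : H | wordDist T 1 w ≤ (n : ℕ∞)} : Set H),
        ∃ p, p ∈ Q₂ ∧ ((x⁻¹ : Q₁) : H) = g * p * ((w : H))⁻¹ := fun x => key1 x⁻¹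
    choose f p hp hx using hc
    refine index_ne_zero_of_map (K2.subgroupOf Q₁) f ?_
    intro x y hfxy
    rw [Subgroup.mem_subgroupOf]
    have ex : ((x : H))⁻¹ = g * p x * ((f y : H))⁻¹ := by
      have := hx x; rw [hfxy] at this; simpa using this
    have ey : ((y : H))⁻¹ = g * p y * ((f y : H))⁻¹ := by
      simpa using hx y
    have e : ((x⁻¹ * y : Q₁) : H) = g * (p x * (p y)⁻¹) * g⁻¹ := by
      push_cast
      rw [ex, ← inv_inv ((y : H)), ey]
      group
    rw [e]
    exact mem_conjSub.mpr ⟨p x * (p y)⁻¹, Q₂.mul_mem (hp x) (Q₂.inv_mem (hp y)), rfl⟩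

/-- For an `(L, C, M)`-quasi-isometry of pairs `q : (G, Ps) → (H, Qs)` with
`Qs` reduced, the relation `q̇` is the graph of a surjective function `G/Ps → H/Qs`; if
moreover `Ps` is reduced, it is a bijection. -/
theorem dotq_function {H : Type*} [Group H]
    (S : Set G) (hS : S.Finite) (hgenS : Subgroup.closure S = ⊤)
    (T : Set H) (hT : T.Finite) (hgenT : Subgroup.closure T = ⊤)
    (q : G → H) (Ps : Set (Subgroup G)) (Qs : Set (Subgroup H)) (L C M : ℕ)
    (hq : IsQIPair S T q Ps Qs L C M) (hred : Reduced Qs) :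
    ((∀ A ∈ cosetsOf Ps, ∃! B, B ∈ cosetsOf Qs ∧ hdist T (q '' A) B < (M : ℕ∞)) ∧
      (∀ B ∈ cosetsOf Qs, ∃ A ∈ cosetsOf Ps, hdist T (q '' A) B < (M : ℕ∞))) ∧
    (Reduced Ps →
      ∀ B ∈ cosetsOf Qs, ∃! A, A ∈ cosetsOf Ps ∧ hdist T (q '' A) B < (M : ℕ∞)) := by
  obtain ⟨hqi, hsurjq, hfwd, hbwd⟩ := hq
  -- uniqueness on the H side
  have uniqH : ∀ (X : Set H) (B₁ B₂ : Set H), B₁ ∈ cosetsOf Qs → B₂ ∈ cosetsOf Qs →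
      hdist T X B₁ < (M : ℕ∞) → hdist T X B₂ < (M : ℕ∞) → B₁ = B₂ := by
    intro X B₁ B₂ hB₁ hB₂ hd₁ hd₂
    obtain ⟨k₁, Q₁, hQ₁, rfl⟩ := hB₁
    obtain ⟨k₂, Q₂, hQ₂, rfl⟩ := hB₂
    obtain ⟨r₁, hr₁, hXr₁, hr₁X⟩ := hdist_lt hd₁
    obtain ⟨r₂, hr₂, hXr₂, hr₂X⟩ := hdist_lt hd₂
    have hle : r₁ + r₂ ≤ ((M + M : ℕ) : ℕ∞) := by
      push_cast
      exact add_le_add hr₁.le hr₂.le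
    have hle' : r₂ + r₁ ≤ ((M + M : ℕ) : ℕ∞) := by
      push_cast
      exact add_le_add hr₂.le hr₁.le
    have hsub1 : (k₁ • (Q₁ : Set H)) ⊆ nbhd T ((M + M : ℕ) : ℕ∞) (k₂ • (Q₂ : Set H)) :=
      (nbhd_chain hr₁X hXr₂).trans (nbhd_mono T hle _)
    have hsub2 : (k₂ • (Q₂ : Set H)) ⊆ nbhd T ((M + M : ℕ) : ℕ∞) (k₁ • (Q₁ : Set H)) :=
      (nbhd_chain hr₂X hXr₁).trans (nbhd_mono T hle' _)
    obtain ⟨hQeq, hmem⟩ := hred Q₁ hQ₁ Q₂ hQ₂ (k₁⁻¹ * k₂)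
      (commensurable_of_nbhd T hT (M + M) k₁ k₂ Q₁ Q₂ hsub1 hsub2)
    subst hQeq
    rw [show k₂ • (Q₁ : Set H) = k₁ • ((k₁⁻¹ * k₂) • (Q₁ : Set H)) by
      rw [smul_smul, mul_inv_cancel_left], smul_coe_set hmem]
  -- pulling back neighbourhood inclusions through q
  have pull : ∀ (A₁ A₂ : Set G) (r : ℕ), (q '' A₁) ⊆ nbhd T (r : ℕ∞) (q '' A₂) →
      A₁ ⊆ nbhd S ((L * r + C : ℕ) : ℕ∞) A₂ := by
    intro A₁ A₂ r h a₁ ha₁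
    obtain ⟨y, hy, hd⟩ := h ⟨a₁, ha₁, rfl⟩
    obtain ⟨a₂, ha₂, rfl⟩ := hy
    refine ⟨a₂, ha₂, ?_⟩
    calc wordDist S a₁ a₂ ≤ (L : ℕ∞) * wordDist T (q a₁) (q a₂) + (C : ℕ∞) := (hqi a₁ a₂).2
      _ ≤ (L : ℕ∞) * (r : ℕ∞) + (C : ℕ∞) := add_le_add (mul_le_mul' le_rfl hd) le_rfl
      _ = ((L * r + C : ℕ) : ℕ∞) := by push_cast; ring
  -- uniqueness on the G side
  have uniqG : Reduced Ps → ∀ (X : Set H) (A₁ A₂ : Set G), A₁ ∈ cosetsOf Ps →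
      A₂ ∈ cosetsOf Ps → hdist T (q '' A₁) X < (M : ℕ∞) → hdist T (q '' A₂) X < (M : ℕ∞) →
      A₁ = A₂ := by
    intro hPs X A₁ A₂ hA₁ hA₂ hd₁ hd₂
    obtain ⟨r₁, hr₁, h1X, hX1⟩ := hdist_lt hd₁
    obtain ⟨r₂, hr₂, h2X, hX2⟩ := hdist_lt hd₂
    have hle : r₁ + r₂ ≤ ((M + M : ℕ) : ℕ∞) := by
      push_cast
      exact add_le_add hr₁.le hr₂.le
    have hle' : r₂ + r₁ ≤ ((M + M : ℕ) : ℕ∞) := by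
      push_cast
      exact add_le_add hr₂.le hr₁.le
    have h12 : q '' A₁ ⊆ nbhd T ((M + M : ℕ) : ℕ∞) (q '' A₂) :=
      (nbhd_chain h1X hX2).trans (nbhd_mono T hle _)
    have h21 : q '' A₂ ⊆ nbhd T ((M + M : ℕ) : ℕ∞) (q '' A₁) :=
      (nbhd_chain h2X hX1).trans (nbhd_mono T hle' _)
    obtain ⟨g₁, P₁, hP₁, rfl⟩ := hA₁
    obtain ⟨g₂, P₂, hP₂, rfl⟩ := hA₂
    obtain ⟨hPeq, hmem⟩ := hPs P₁ hP₁ P₂ hP₂ (g₁⁻¹ * g₂)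
      (commensurable_of_nbhd S hS (L * (M + M) + C) g₁ g₂ P₁ P₂
        (pull _ _ (M + M) h12) (pull _ _ (M + M) h21))
    subst hPeq
    rw [show g₂ • (P₁ : Set G) = g₁ • ((g₁⁻¹ * g₂) • (P₁ : Set G)) by
      rw [smul_smul, mul_inv_cancel_left], smul_coe_set hmem]
  refine ⟨⟨?_, hbwd⟩, ?_⟩
  · intro A hA
    obtain ⟨B, hB, hdB⟩ := hfwd A hA
    exact ⟨B, ⟨hB, hdB⟩, fun B' hB' => uniqH (q '' A) B' B hB'.1 hB hB'.2 hdB⟩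
  · intro hPs B hB
    obtain ⟨A, hA, hdA⟩ := hbwd B hB
    exact ⟨A, ⟨hA, hdA⟩, fun A' hA' => uniqG hPs B A' A hA'.1 hA hA'.2 hdA⟩
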